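/- Let P(s) = \sum_{k=1}^m a_k k^{-s} with a_1 \neq 0, r \in \mathbb{R}, and suppose P has a zero \rho = r + \delta + it_0 with \delta > 0. Then for every n, d_{n,r}^2 \ge 2\delta / |\rho - r + 1/2|^2, where d_{n,r} is the L^2(0,\infty) distance from \mathbf{1}_{(0,1)} to span\{\kappa_r(1/(kx)) : k = 1,\ldots,n\} and \kappa_r(x) = \sum_{k \le x} a_k k^{-(r-1/2)}. -/

import Mathlib

open Finset Filter Topology MeasureTheory

/-- `κ_r(x) = ∑_{1 ≤ k ≤ x} a_k k^{-(r-1/2)}` -/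
noncomputable def kappa (a : ℕ → ℂ) (r : ℝ) (x : ℝ) : ℂ :=
  ∑ k ∈ Finset.Icc 1 ⌊x⌋₊, a k / (k : ℂ) ^ ((r : ℂ) - 1/2)

/-- The square of the Báez-Duarte distance `d_{n,r}`: the squared `L²(0,∞)` distance from the
indicator of `(0,1)` to the span of `x ↦ κ_r(1/(kx))`, `k = 1, …, n`. -/
noncomputable def baezDuarteDistSq (a : ℕ → ℂ) (r : ℝ) (n : ℕ) : ℝ :=
  ⨅ b : Fin n → ℂ, ∫ x in Set.Ioi (0 : ℝ),
    ‖Set.indicator (Set.Ioo (0 : ℝ) 1) (fun _ => (1 : ℂ)) x -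
      ∑ k : Fin n, b k * kappa a r (1 / (((k : ℕ) + 1 : ℕ) * x))‖ ^ 2

section Aux

lemma BD.sum_Icc_floor_eq (m : ℕ) (F : ℕ → ℂ) (hF : ∀ k, m < k → F k = 0) {y : ℝ} (hy : 0 ≤ y) :
    ∑ j ∈ Icc 1 ⌊y⌋₊, F j = ∑ j ∈ Icc 1 m, if (j:ℝ) ≤ y then F j else 0 := by
  have h1 : ∑ j ∈ Icc 1 ⌊y⌋₊, F j
      = ∑ j ∈ Icc 1 (max m ⌊y⌋₊), if (j:ℝ) ≤ y then F j else 0 := by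
    rw [show ∑ j ∈ Icc 1 ⌊y⌋₊, F j = ∑ j ∈ Icc 1 ⌊y⌋₊, if (j:ℝ) ≤ y then F j else 0 from
      Finset.sum_congr rfl fun j hj => by
        simp only [mem_Icc] at hj
        rw [if_pos ((Nat.le_floor_iff hy).mp hj.2)]]
    apply Finset.sum_subset
    · exact Finset.Icc_subset_Icc le_rfl (le_max_right _ _)
    · intro j hj hj'
      simp only [mem_Icc] at hj hj'
      have h : ¬ j ≤ ⌊y⌋₊ := by omega
      rw [if_neg (fun h' => h (Nat.le_floor h'))]
  have h2 : ∑ j ∈ Icc 1 m, (if (j:ℝ) ≤ y then F j else 0)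
      = ∑ j ∈ Icc 1 (max m ⌊y⌋₊), if (j:ℝ) ≤ y then F j else 0 := by
    apply Finset.sum_subset
    · exact Finset.Icc_subset_Icc le_rfl (le_max_left _ _)
    · intro j hj hj'
      simp only [mem_Icc] at hj hj'
      have h : m < j := by omega
      split <;> simp [hF j h]
  rw [h1, h2]

lemma BD.kappa_step (m : ℕ) (a : ℕ → ℂ) (ha : ∀ k, m < k → a k = 0) (r : ℝ)
    {k : ℕ} (hk : 1 ≤ k) {x : ℝ} (hx : 0 < x) :
    kappa a r (1/(k*x)) = ∑ j ∈ Icc 1 m,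
      (Set.Ioc (0:ℝ) (1/(j*k))).indicator (fun _ => a j / (j:ℂ)^((r:ℂ)-1/2)) x := by
  have hkx : 0 < (k:ℝ) * x := by
    have : (1:ℝ) ≤ (k:ℝ) := by exact_mod_cast hk
    positivity
  rw [kappa, BD.sum_Icc_floor_eq m _ (fun j hj => by simp [ha j hj]) (by positivity)]
  refine Finset.sum_congr rfl fun j hj => ?_
  simp only [mem_Icc] at hj
  have hj1 : (0:ℝ) < j := by exact_mod_cast hj.1
  have hiff : (j:ℝ) ≤ 1/((k:ℝ)*x) ↔ x ≤ 1/((j:ℝ)*k) := by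
    rw [le_div_iff₀ hkx, le_div_iff₀ (by positivity)]
    constructor <;> intro h <;> nlinarith
  by_cases hc : (j:ℝ) ≤ 1/((k:ℝ)*x)
  · rw [if_pos hc, Set.indicator_of_mem (Set.mem_Ioc.mpr ⟨hx, hiff.mp hc⟩)]
  · rw [if_neg hc, Set.indicator_of_notMem (fun hmem => hc (hiff.mpr (Set.mem_Ioc.mp hmem).2))]

lemma BD.integral_indicator_cpow {s : ℂ} (hs : 0 < s.re) {c : ℝ} (hc : 0 < c) (hc1 : c ≤ 1) :
    ∫ x in Set.Ioi (0:ℝ), (Set.Ioc (0:ℝ) c).indicator (fun _ => (1:ℂ)) x *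
      (Set.Ioo (0:ℝ) 1).indicator (fun y : ℝ => (y:ℂ)^(s - 1/2)) x
    = (c:ℂ)^(s + 1/2) / (s + 1/2) := by
  have hs2 : s + 1/2 ≠ 0 := by
    intro h
    have := congrArg Complex.re h
    simp [Complex.add_re] at this
    norm_num at this
    linarith
  have h0 : ∀ᵐ x : ℝ, x ≠ c := by
    simpa [ae_iff, not_not] using measure_singleton (α := ℝ) c
  have hae : (fun x => (Set.Ioc (0:ℝ) c).indicator (fun _ => (1:ℂ)) x *
      (Set.Ioo (0:ℝ) 1).indicator (fun y : ℝ => (y:ℂ)^(s - 1/2)) x)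
      =ᵐ[volume] (Set.Ioo (0:ℝ) c).indicator (fun y : ℝ => (y:ℂ)^(s - 1/2)) := by
    filter_upwards [h0] with x hx
    by_cases hmem : x ∈ Set.Ioo (0:ℝ) c
    · obtain ⟨h1, h2⟩ := hmem
      rw [Set.indicator_of_mem (Set.mem_Ioc.mpr ⟨h1, h2.le⟩),
          Set.indicator_of_mem (Set.mem_Ioo.mpr ⟨h1, lt_of_lt_of_le h2 hc1⟩),
          Set.indicator_of_mem (Set.mem_Ioo.mpr ⟨h1, h2⟩), one_mul]
    · rw [Set.indicator_of_notMem hmem]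
      have h3 : x ∉ Set.Ioc 0 c := fun h => hmem ⟨h.1, lt_of_le_of_ne h.2 hx⟩
      rw [Set.indicator_of_notMem h3, zero_mul]
  rw [integral_congr_ae (ae_restrict_of_ae hae),
      setIntegral_indicator measurableSet_Ioo,
      show Set.Ioi (0:ℝ) ∩ Set.Ioo 0 c = Set.Ioo 0 c from
        Set.inter_eq_self_of_subset_right (Set.Ioo_subset_Ioi_self),
      ← integral_Ioc_eq_integral_Ioo, ← intervalIntegral.integral_of_le hc.le,
      integral_cpow (Or.inl (by simp; norm_num; linarith))]
  rw [show s - 1/2 + 1 = s + 1/2 by ring, Complex.ofReal_zero,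
      Complex.zero_cpow hs2, sub_zero]

lemma BD.h_sq_eq {s : ℂ} (x : ℝ) :
    ‖(Set.Ioo (0:ℝ) 1).indicator (fun y : ℝ => (y:ℂ)^(s - 1/2)) x‖^2
      = (Set.Ioo (0:ℝ) 1).indicator (fun y : ℝ => y ^ (2*s.re - 1)) x := by
  by_cases hx : x ∈ Set.Ioo (0:ℝ) 1
  · rw [Set.indicator_of_mem hx, Set.indicator_of_mem hx]
    rw [Complex.norm_cpow_eq_rpow_re_of_pos hx.1]
    rw [← Real.rpow_natCast (x ^ (s-1/2).re) 2, ← Real.rpow_mul hx.1.le]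
    congr 1
    simp [Complex.sub_re]
    norm_num
    ring
  · rw [Set.indicator_of_notMem hx, Set.indicator_of_notMem hx]
    simp

lemma BD.integral_sq_norm_h {s : ℂ} (hs : 0 < s.re) :
    ∫ x in Set.Ioi (0:ℝ),
      ‖(Set.Ioo (0:ℝ) 1).indicator (fun y : ℝ => (y:ℂ)^(s - 1/2)) x‖^2
    = 1 / (2 * s.re) := by
  simp_rw [BD.h_sq_eq]
  rw [setIntegral_indicator measurableSet_Ioo,
      show Set.Ioi (0:ℝ) ∩ Set.Ioo 0 1 = Set.Ioo 0 1 from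
        Set.inter_eq_self_of_subset_right (Set.Ioo_subset_Ioi_self),
      ← integral_Ioc_eq_integral_Ioo, ← intervalIntegral.integral_of_le one_pos.le,
      integral_rpow (Or.inl (by linarith))]
  rw [Real.one_rpow, Real.zero_rpow (by linarith), show 2*s.re - 1 + 1 = 2*s.re by ring]
  norm_num

lemma BD.key_sum (m : ℕ) (a : ℕ → ℂ) (r : ℝ) (ρ : ℂ)
    (hρ : (∑ j ∈ Finset.Icc 1 m, a j * (j : ℂ) ^ (-ρ)) = 0) (k : ℕ) :
    ∑ j ∈ Icc 1 m, (a j / (j:ℂ)^((r:ℂ)-1/2)) *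
      (((1/((j:ℝ)*(k:ℝ)) : ℝ) : ℂ)^((ρ - (r:ℂ)) + 1/2) / ((ρ - (r:ℂ)) + 1/2)) = 0 := by
  set w : ℂ := (ρ - (r:ℂ)) + 1/2 with hw
  have hterm : ∀ j ∈ Icc 1 m, (a j / (j:ℂ)^((r:ℂ)-1/2)) *
      (((1/((j:ℝ)*(k:ℝ)) : ℝ) : ℂ)^w / w) = (a j * (j:ℂ)^(-ρ)) * ((k:ℂ)^w * w)⁻¹ := by
    intro j hj
    simp only [mem_Icc] at hj
    have hj0 : (j:ℂ) ≠ 0 := Nat.cast_ne_zero.mpr (by omega)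
    have hcast : ((1/((j:ℝ)*(k:ℝ)) : ℝ) : ℂ) = (((j*k : ℕ):ℂ))⁻¹ := by push_cast; ring
    rw [hcast, Complex.inv_cpow _ _ (by rw [Complex.natCast_arg]; exact Real.pi_ne_zero.symm)]
    have hmul : ((j*k : ℕ):ℂ)^w = (j:ℂ)^w * (k:ℂ)^w := by
      have := Complex.mul_cpow_ofReal_nonneg (Nat.cast_nonneg j) (Nat.cast_nonneg k) w
      push_cast at this ⊢
      exact this
    have hjj : ((j:ℂ)^((r:ℂ)-1/2))⁻¹ * ((j:ℂ)^w)⁻¹ = (j:ℂ)^(-ρ) := by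
      rw [← Complex.cpow_neg, ← Complex.cpow_neg, ← Complex.cpow_add _ _ hj0]
      congr 1
      rw [hw]; ring
    rw [hmul, mul_inv, div_eq_mul_inv (a j), div_eq_mul_inv, mul_inv]
    rw [← hjj]; ring
  rw [Finset.sum_congr rfl hterm, ← Finset.sum_mul, hρ, zero_mul]

end Aux

theorem baezDuarte_dist_lower_bound_of_zero (m : ℕ) (hm : 1 ≤ m) (a : ℕ → ℂ)
    (ha1 : a 1 ≠ 0) (ha : ∀ k, m < k → a k = 0) (r : ℝ) (ρ : ℂ)
    (hρ : (∑ k ∈ Finset.Icc 1 m, a k * (k : ℂ) ^ (-ρ)) = 0) (hre : r < ρ.re) :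
    ∀ n : ℕ, 2 * (ρ.re - r) / ‖ρ - r + 1/2‖ ^ 2 ≤ baezDuarteDistSq a r n := by
  intro n
  set s : ℂ := ρ - (r:ℂ) with hsdef
  have hsre : s.re = ρ.re - r := by simp [hsdef]
  have hspos : 0 < s.re := by rw [hsre]; linarith
  have hs2 : s + 1/2 ≠ 0 := by
    intro hcontra
    have := congrArg Complex.re hcontra
    simp [Complex.add_re] at this
    norm_num at this
    linarith
  rw [baezDuarteDistSq]
  apply le_ciInf
  intro b
  -- local abbreviations
  set K : ℕ → ℝ → ℂ := fun k x => ∑ j ∈ Icc 1 m,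
    (Set.Ioc (0:ℝ) (1/((j:ℝ)*(k:ℝ)))).indicator (fun _ => a j / (j:ℂ)^((r:ℂ)-1/2)) x with hKdef
  set h : ℝ → ℂ := fun x => (Set.Ioo (0:ℝ) 1).indicator (fun y : ℝ => (y:ℂ)^(s - 1/2)) x with hhdef
  set g : ℝ → ℂ := fun x =>
    (Set.Ioo (0:ℝ) 1).indicator (fun _ => (1:ℂ)) x - ∑ k : Fin n, b k * K ((k:ℕ)+1) x with hgdef
  -- rewrite the integrand using the step form of kappa
  have hcong : (∫ x in Set.Ioi (0:ℝ),
      ‖Set.indicator (Set.Ioo (0:ℝ) 1) (fun _ => (1:ℂ)) x -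
        ∑ k : Fin n, b k * kappa a r (1 / (((k:ℕ) + 1 : ℕ) * x))‖^2)
      = ∫ x in Set.Ioi (0:ℝ), ‖g x‖^2 := by
    refine setIntegral_congr_fun measurableSet_Ioi fun x hx => ?_
    have hx0 : 0 < x := hx
    have hkk : ∀ k : Fin n, kappa a r (1 / (((k:ℕ)+1 : ℕ) * x)) = K ((k:ℕ)+1) x := fun k => by
      rw [hKdef]; exact BD.kappa_step m a ha r (by omega) hx0
    rw [hgdef]
    simp only [hkk]
  rw [hcong]
  -- measure finiteness facts
  have hμIoc : ∀ e : ℝ, (volume.restrict (Set.Ioi (0:ℝ))) (Set.Ioc 0 e) ≠ ⊤ := by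
    intro e
    refine ne_of_lt (lt_of_le_of_lt (Measure.restrict_apply_le _ _) ?_)
    rw [Real.volume_Ioc]; exact ENNReal.ofReal_lt_top
  have hμIoo : (volume.restrict (Set.Ioi (0:ℝ))) (Set.Ioo (0:ℝ) 1) ≠ ⊤ := by
    refine ne_of_lt (lt_of_le_of_lt (Measure.restrict_apply_le _ _) ?_)
    rw [Real.volume_Ioo]; exact ENNReal.ofReal_lt_top
  -- Memℒp facts
  have hKmem : ∀ k : ℕ, MemLp (K k) 2 (volume.restrict (Set.Ioi (0:ℝ))) := fun k =>
    memLp_finset_sum _ (fun j _ =>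
      memLp_indicator_const 2 measurableSet_Ioc _ (Or.inr (hμIoc _)))
  have hgmem : MemLp g 2 (volume.restrict (Set.Ioi (0:ℝ))) :=
    (memLp_indicator_const 2 measurableSet_Ioo _ (Or.inr hμIoo)).sub
      (memLp_finset_sum _ (fun k _ => (hKmem ((k:ℕ)+1)).const_mul (b k)))
  -- measurability of the cpow kernel
  have hFmeas : Measurable (fun y : ℝ => (y:ℂ)^(s - 1/2)) := by
    have heq : (fun y : ℝ => (y:ℂ)^(s - 1/2)) = fun y : ℝ =>
        if (y:ℂ) = 0 then (if s - 1/2 = 0 then 1 else 0)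
        else Complex.exp (Complex.log (y:ℂ) * (s - 1/2)) := by
      funext y; rw [Complex.cpow_def]
    rw [heq]
    exact Measurable.ite (Complex.measurable_ofReal (measurableSet_singleton 0))
      measurable_const
      (Complex.measurable_exp.comp
        ((Complex.measurable_log.comp Complex.measurable_ofReal).mul_const _))
  have hhmeas : AEStronglyMeasurable h (volume.restrict (Set.Ioi (0:ℝ))) :=
    (hFmeas.indicator measurableSet_Ioo).aestronglyMeasurable
  -- h is integrable
  have hhint : Integrable h (volume.restrict (Set.Ioi (0:ℝ))) := by
    rw [hhdef, integrable_indicator_iff measurableSet_Ioo]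
    rw [IntegrableOn, Measure.restrict_restrict measurableSet_Ioo,
        show Set.Ioo (0:ℝ) 1 ∩ Set.Ioi 0 = Set.Ioo 0 1 from
          Set.inter_eq_self_of_subset_left (fun x hx => hx.1)]
    refine ((intervalIntegral.intervalIntegrable_cpow' (r := s - 1/2) ?_).1).mono_set
      Set.Ioo_subset_Ioc_self
    simp [Complex.sub_re]
    norm_num
    linarith
  -- h is in L²
  have hhsq : Integrable (fun x => ‖h x‖^2) (volume.restrict (Set.Ioi (0:ℝ))) := by
    have heq : (fun x => ‖h x‖^2)
        = fun x => (Set.Ioo (0:ℝ) 1).indicator (fun y : ℝ => y ^ (2*s.re - 1)) x := by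
      funext x; rw [hhdef]; exact BD.h_sq_eq x
    rw [heq, integrable_indicator_iff measurableSet_Ioo]
    rw [IntegrableOn, Measure.restrict_restrict measurableSet_Ioo,
        show Set.Ioo (0:ℝ) 1 ∩ Set.Ioi 0 = Set.Ioo 0 1 from
          Set.inter_eq_self_of_subset_left (fun x hx => hx.1)]
    exact ((intervalIntegral.intervalIntegrable_rpow' (by linarith)).1).mono_set
      Set.Ioo_subset_Ioc_self
  have hhmem : MemLp h 2 (volume.restrict (Set.Ioi (0:ℝ))) :=
    (memLp_two_iff_integrable_sq_norm hhmeas).mpr hhsq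
  -- integrability of indicator * h
  have hInd : ∀ e : ℝ, Integrable
      (fun x => (Set.Ioc (0:ℝ) e).indicator (fun _ => (1:ℂ)) x * h x)
      (volume.restrict (Set.Ioi (0:ℝ))) := by
    intro e
    refine hhint.bdd_mul
      ((measurable_const.indicator measurableSet_Ioc).aestronglyMeasurable) (c := 1) (Eventually.of_forall fun x => ?_)
    by_cases hx : x ∈ Set.Ioc (0:ℝ) e <;> simp [hx]
  have hInd1 : Integrable
      (fun x => (Set.Ioo (0:ℝ) 1).indicator (fun _ => (1:ℂ)) x * h x)
      (volume.restrict (Set.Ioi (0:ℝ))) := by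
    refine hhint.bdd_mul
      ((measurable_const.indicator measurableSet_Ioo).aestronglyMeasurable) (c := 1) (Eventually.of_forall fun x => ?_)
    by_cases hx : x ∈ Set.Ioo (0:ℝ) 1 <;> simp [hx]
  -- integral of indicator(Ioo 0 1) * h
  have hIh1 : (∫ x in Set.Ioi (0:ℝ),
      (Set.Ioo (0:ℝ) 1).indicator (fun _ => (1:ℂ)) x * h x) = 1/(s + 1/2) := by
    have hpt : ∀ x, (Set.Ioo (0:ℝ) 1).indicator (fun _ => (1:ℂ)) x * h x
        = (Set.Ioc (0:ℝ) 1).indicator (fun _ => (1:ℂ)) x * h x := by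
      intro x
      by_cases hx : x ∈ Set.Ioo (0:ℝ) 1
      · rw [Set.indicator_of_mem hx, Set.indicator_of_mem (Set.mem_Ioc.mpr ⟨hx.1, hx.2.le⟩)]
      · rw [Set.indicator_of_notMem hx, hhdef]
        simp only
        rw [Set.indicator_of_notMem hx, mul_zero, mul_zero]
    simp_rw [hpt, hhdef]
    rw [BD.integral_indicator_cpow hspos one_pos le_rfl]
    norm_num
  -- expansion of K k * h
  have hexpK : ∀ k : ℕ, (fun x => K k x * h x) = fun x => ∑ j ∈ Icc 1 m,
      (a j / (j:ℂ)^((r:ℂ)-1/2)) *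
        ((Set.Ioc (0:ℝ) (1/((j:ℝ)*(k:ℝ)))).indicator (fun _ => (1:ℂ)) x * h x) := by
    intro k
    funext x
    rw [hKdef]
    simp only
    rw [Finset.sum_mul]
    refine Finset.sum_congr rfl fun j hj => ?_
    rw [← mul_assoc]
    congr 1
    by_cases hx : x ∈ Set.Ioc (0:ℝ) (1/((j:ℝ)*(k:ℝ)))
    · rw [Set.indicator_of_mem hx, Set.indicator_of_mem hx, mul_one]
    · rw [Set.indicator_of_notMem hx, Set.indicator_of_notMem hx, mul_zero]
  have hintK : ∀ k : ℕ, Integrable (fun x => K k x * h x)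
      (volume.restrict (Set.Ioi (0:ℝ))) := by
    intro k
    rw [hexpK k]
    exact integrable_finset_sum _ (fun j _ => (hInd _).const_mul _)
  -- the integral of K k * h vanishes
  have hIK : ∀ k : ℕ, 1 ≤ k → (∫ x in Set.Ioi (0:ℝ), K k x * h x) = 0 := by
    intro k hk
    calc (∫ x in Set.Ioi (0:ℝ), K k x * h x)
        = ∑ j ∈ Icc 1 m, (a j / (j:ℂ)^((r:ℂ)-1/2)) *
            (∫ x in Set.Ioi (0:ℝ),
              (Set.Ioc (0:ℝ) (1/((j:ℝ)*(k:ℝ)))).indicator (fun _ => (1:ℂ)) x * h x) := by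
          rw [show (∫ x in Set.Ioi (0:ℝ), K k x * h x)
              = ∫ x in Set.Ioi (0:ℝ), ∑ j ∈ Icc 1 m,
                (a j / (j:ℂ)^((r:ℂ)-1/2)) *
                  ((Set.Ioc (0:ℝ) (1/((j:ℝ)*(k:ℝ)))).indicator (fun _ => (1:ℂ)) x * h x) from
            congrArg _ (hexpK k)]
          rw [integral_finset_sum _ (fun j _ => (hInd _).const_mul _)]
          exact Finset.sum_congr rfl fun j _ => integral_const_mul _ _
      _ = ∑ j ∈ Icc 1 m, (a j / (j:ℂ)^((r:ℂ)-1/2)) *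
            (((1/((j:ℝ)*(k:ℝ)) : ℝ) : ℂ)^(s + 1/2) / (s + 1/2)) := by
          refine Finset.sum_congr rfl fun j hj => ?_
          simp only [mem_Icc] at hj
          have hj1 : (1:ℝ) ≤ (j:ℝ) := by exact_mod_cast hj.1
          have hk1 : (1:ℝ) ≤ (k:ℝ) := by exact_mod_cast hk
          have hpos : 0 < 1/((j:ℝ)*(k:ℝ)) := by positivity
          have hle : 1/((j:ℝ)*(k:ℝ)) ≤ 1 := by
            rw [div_le_one (by positivity)]
            nlinarith
          rw [hhdef]
          rw [BD.integral_indicator_cpow hspos hpos hle]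
      _ = 0 := by
          rw [hsdef]
          exact BD.key_sum m a r ρ hρ k
  -- the full inner product integral
  have hIgh : (∫ x in Set.Ioi (0:ℝ), g x * h x) = 1/(s + 1/2) := by
    have hexp : (fun x => g x * h x) = fun x =>
        (Set.Ioo (0:ℝ) 1).indicator (fun _ => (1:ℂ)) x * h x
          - ∑ k : Fin n, b k * (K ((k:ℕ)+1) x * h x) := by
      funext x
      rw [hgdef]
      simp only
      rw [sub_mul, Finset.sum_mul]
      congr 1
      exact Finset.sum_congr rfl fun k _ => mul_assoc _ _ _
    rw [show (∫ x in Set.Ioi (0:ℝ), g x * h x) = ∫ x in Set.Ioi (0:ℝ),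
        ((Set.Ioo (0:ℝ) 1).indicator (fun _ => (1:ℂ)) x * h x
          - ∑ k : Fin n, b k * (K ((k:ℕ)+1) x * h x)) from congrArg _ hexp]
    have hsumInt : Integrable (fun x => ∑ k : Fin n, b k * (K ((k:ℕ)+1) x * h x))
        (volume.restrict (Set.Ioi (0:ℝ))) :=
      integrable_finset_sum _ (fun k _ => (hintK ((k:ℕ)+1)).const_mul _)
    have hfs : (∫ x in Set.Ioi (0:ℝ), ∑ k : Fin n, b k * (K ((k:ℕ)+1) x * h x))
        = ∑ k : Fin n, ∫ x in Set.Ioi (0:ℝ), b k * (K ((k:ℕ)+1) x * h x) :=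
      integral_finset_sum _ (fun k _ => (hintK ((k:ℕ)+1)).const_mul _)
    rw [integral_sub hInd1 hsumInt, hfs]
    rw [hIh1]
    have hz : ∑ k : Fin n, (∫ x in Set.Ioi (0:ℝ), b k * (K ((k:ℕ)+1) x * h x)) = 0 := by
      refine Finset.sum_eq_zero fun k _ => ?_
      rw [integral_const_mul, hIK ((k:ℕ)+1) (by omega), mul_zero]
    rw [hz, sub_zero]
  -- Cauchy–Schwarz (Hölder with p = q = 2)
  have hpq : (2:ℝ).HolderConjugate 2 := Real.holderConjugate_iff.mpr ⟨one_lt_two, by norm_num⟩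
  have h2 : (ENNReal.ofReal (2:ℝ)) = 2 := by
    rw [show (2:ℝ) = ((2:ℕ):ℝ) by norm_num, ENNReal.ofReal_natCast]
    norm_num
  have hCS := integral_mul_norm_le_Lp_mul_Lq (μ := volume.restrict (Set.Ioi (0:ℝ))) hpq
    (h2 ▸ hgmem) (h2 ▸ hhmem)
  have hnorm : ‖∫ x in Set.Ioi (0:ℝ), g x * h x‖
      ≤ ∫ x in Set.Ioi (0:ℝ), ‖g x‖ * ‖h x‖ := by
    refine (norm_integral_le_integral_norm _).trans_eq ?_
    exact integral_congr_ae (Eventually.of_forall fun x => norm_mul _ _)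
  rw [hIgh] at hnorm
  -- convert rpow exponents to nat pow
  have hrpow : ∀ t : ℝ, t ^ (2:ℝ) = t ^ (2:ℕ) := fun t => by
    rw [show (2:ℝ) = ((2:ℕ):ℝ) by norm_num, Real.rpow_natCast]
  simp_rw [hrpow] at hCS
  have hIh2 : (∫ x in Set.Ioi (0:ℝ), ‖h x‖^2) = 1/(2*s.re) := by
    rw [hhdef]
    exact BD.integral_sq_norm_h hspos
  rw [hIh2] at hCS
  set A := ∫ x in Set.Ioi (0:ℝ), ‖g x‖^2 with hAdef
  have hA0 : 0 ≤ A := by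
    rw [hAdef]
    exact integral_nonneg fun x => by positivity
  have key : ‖(1:ℂ)/(s+1/2)‖ ≤ A^((1:ℝ)/2) * (1/(2*s.re))^((1:ℝ)/2) := hnorm.trans hCS
  have hB : 0 < ‖s + 1/2‖ := norm_pos_iff.mpr hs2
  have hsq : (1/‖s+1/2‖)^2 ≤ A * (1/(2*s.re)) := by
    have h1 : ‖(1:ℂ)/(s+1/2)‖ = 1/‖s+1/2‖ := by
      rw [norm_div, norm_one]
    have hh2 : (A^((1:ℝ)/2) * (1/(2*s.re))^((1:ℝ)/2))^2 = A * (1/(2*s.re)) := by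
      rw [mul_pow, ← Real.rpow_natCast (A^((1:ℝ)/2)) 2,
          ← Real.rpow_natCast ((1/(2*s.re))^((1:ℝ)/2)) 2,
          ← Real.rpow_mul hA0, ← Real.rpow_mul (by positivity)]
      norm_num
    calc (1/‖s+1/2‖)^2
        ≤ (A^((1:ℝ)/2) * (1/(2*s.re))^((1:ℝ)/2))^2 := by
          apply pow_le_pow_left₀ (by positivity) (h1 ▸ key)
      _ = A * (1/(2*s.re)) := hh2
  rw [← hsre]
  set B := ‖s + 1/2‖ with hBdef
  rw [div_le_iff₀ (by positivity : (0:ℝ) < B^2)]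
  have hmain := mul_le_mul_of_nonneg_left hsq
    (by positivity : (0:ℝ) ≤ 2*s.re * B^2)
  have hBne : B ≠ 0 := hB.ne'
  have hsne : s.re ≠ 0 := hspos.ne'
  have l1 : 2*s.re * B^2 * (1/B)^2 = 2*s.re := by
    field_simp
  have l2 : 2*s.re * B^2 * (A * (1/(2*s.re))) = A * B^2 := by
    field_simp
  rw [l1, l2] at hmain
  exact hmain
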